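/- If a path α : I → X is continuous and the space X is locally path connected at both α(0) and α(1), then α is well-ended. -/

import Mathlib

open unitInterval Topology
open Set

section Glue

variable {X : Type*} [TopologicalSpace X] (α : C(I, X)) {a b : X}
  (p : Path a (α 0)) (q : Path (α 1) b) (ε : ℝ)

private noncomputable def glueFun : ℝ → X := fun u =>
  if u ≤ ε/2 then p (projIcc 0 1 zero_le_one (2*u/ε))
  else if u ≤ ε then α (projIcc 0 1 zero_le_one (2*u - ε))
  else if u ≤ 1-ε then α (projIcc 0 1 zero_le_one u)
  else if u ≤ 1-ε/2 then α (projIcc 0 1 zero_le_one (2*u - (1-ε)))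
  else q (projIcc 0 1 zero_le_one ((2*u - (2-ε))/ε))

variable {ε}

private lemma glueFun_continuous (hε : 0 < ε) (hε2 : ε < 1/2) : Continuous (glueFun α p q ε) := by
  have hc1 : Continuous fun u : ℝ => p (projIcc 0 1 zero_le_one (2*u/ε)) :=
    p.continuous.comp <| continuous_projIcc.comp (by fun_prop)
  have hc2 : Continuous fun u : ℝ => α (projIcc 0 1 zero_le_one (2*u - ε)) :=
    α.continuous.comp <| continuous_projIcc.comp (by fun_prop)
  have hc3 : Continuous fun u : ℝ => α (projIcc 0 1 zero_le_one u) :=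
    α.continuous.comp continuous_projIcc
  have hc4 : Continuous fun u : ℝ => α (projIcc 0 1 zero_le_one (2*u - (1-ε))) :=
    α.continuous.comp <| continuous_projIcc.comp (by fun_prop)
  have hc5 : Continuous fun u : ℝ => q (projIcc 0 1 zero_le_one ((2*u - (2-ε))/ε)) :=
    q.continuous.comp <| continuous_projIcc.comp (by fun_prop)
  unfold glueFun
  apply Continuous.if_le hc1 ?_ continuous_id continuous_const
  · intro u hu
    have hu' : u = ε/2 := hu
    rw [hu']
    have h1 : 2*(ε/2)/ε = 1 := by field_simp
    have h2 : 2*(ε/2) - ε = 0 := by ring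
    rw [h1, h2, projIcc_right, projIcc_left, if_pos (by linarith : ε/2 ≤ ε)]
    exact p.target
  apply Continuous.if_le hc2 ?_ continuous_id continuous_const
  · intro u hu
    have hu' : u = ε := hu
    rw [hu']
    have h2 : 2*ε - ε = ε := by ring
    rw [h2, if_pos (by linarith : ε ≤ 1-ε)]
  apply Continuous.if_le hc3 ?_ continuous_id continuous_const
  · intro u hu
    have hu' : u = 1-ε := hu
    have h3 : 2*(1-ε)-(1-ε) = 1-ε := by ring
    rw [hu', if_pos (by linarith : (1:ℝ)-ε ≤ 1-ε/2), h3]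
  apply Continuous.if_le hc4 hc5 continuous_id continuous_const
  intro u hu
  have hu' : u = 1-ε/2 := hu
  rw [hu']
  have h1 : 2*(1-ε/2) - (1-ε) = 1 := by ring
  have h2 : (2*(1-ε/2) - (2-ε))/ε = 0 := by field_simp; ring
  rw [h1, h2, projIcc_right, projIcc_left]
  exact q.source.symm

private lemma glueFun_zero (hε : 0 < ε) : glueFun α p q ε 0 = a := by
  rw [glueFun, if_pos (by linarith : (0:ℝ) ≤ ε/2)]
  norm_num

private lemma glueFun_one (hε : 0 < ε) (hε2 : ε < 1/2) : glueFun α p q ε 1 = b := by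
  rw [glueFun, if_neg (by linarith), if_neg (by linarith), if_neg (by linarith),
    if_neg (by linarith)]
  have h : (2*(1:ℝ) - (2-ε))/ε = 1 := by field_simp; ring
  rw [h, projIcc_right]
  exact q.target

private lemma glueFun_mid (hε : 0 < ε) {t : I} (h1 : ε ≤ (t:ℝ)) (h2 : (t:ℝ) ≤ 1-ε) :
    glueFun α p q ε ↑t = α t := by
  rw [glueFun, if_neg (by linarith)]
  by_cases h : (t:ℝ) ≤ ε
  · have ht : (t:ℝ) = ε := le_antisymm h h1
    rw [if_pos h, ht]
    have : 2*ε - ε = ε := by ring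
    rw [this, ← ht, projIcc_val zero_le_one]
  · rw [if_neg h, if_pos h2, projIcc_val zero_le_one]

private lemma glueFun_left (hε : 0 < ε) (hε1 : ε ≤ 1) {t : I} (ht : (t:ℝ) ≤ ε) {O : Set X}
    (hp : ∀ u, p u ∈ O) (hα : ∀ u : I, (u:ℝ) ≤ ε → α u ∈ O) : glueFun α p q ε ↑t ∈ O := by
  rw [glueFun]
  by_cases h : (t:ℝ) ≤ ε/2
  · rw [if_pos h]; exact hp _
  · rw [if_neg h, if_pos ht]
    apply hα
    rw [coe_projIcc]
    have : min 1 (2*(t:ℝ) - ε) ≤ ε := le_trans (min_le_right _ _) (by linarith)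
    exact max_le (by linarith) this

private lemma glueFun_right (hε : 0 < ε) (hε2 : ε < 1/2) {t : I} (ht : 1-ε ≤ (t:ℝ)) {O : Set X}
    (hq : ∀ u, q u ∈ O) (hα : ∀ u : I, 1-ε ≤ (u:ℝ) → α u ∈ O) : glueFun α p q ε ↑t ∈ O := by
  rw [glueFun, if_neg (by linarith), if_neg (by linarith)]
  by_cases h : (t:ℝ) ≤ 1-ε
  · have heq : (t:ℝ) = 1-ε := le_antisymm h ht
    rw [if_pos h, projIcc_val zero_le_one]
    exact hα t ht
  · rw [if_neg h]
    by_cases h4 : (t:ℝ) ≤ 1-ε/2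
    · rw [if_pos h4]
      apply hα
      rw [coe_projIcc]
      have h5 : 1-ε ≤ min 1 (2*(t:ℝ) - (1-ε)) := le_min (by linarith) (by linarith)
      exact le_trans h5 (le_max_right _ _)
    · rw [if_neg h4]; exact hq _

end Glue

/-- A path `α` is well-targeted if every neighborhood `U` of `α` in the space of paths
starting at `α 0` admits an open neighborhood `V` of `α 1` each of whose points is the
endpoint of some path in `U`. -/
def IsWellTargeted {X : Type*} [TopologicalSpace X] (α : C(I, X)) : Prop :=
  ∀ U : Set {β : C(I, X) // β 0 = α 0}, IsOpen U →
    (⟨α, rfl⟩ : {β : C(I, X) // β 0 = α 0}) ∈ U →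
    ∃ V : Set X, IsOpen V ∧ α 1 ∈ V ∧ ∀ b ∈ V, ∃ β ∈ U, β.1 1 = b

/-- A path `α` is well-ended if every neighborhood `U` of `α` in `𝒫X` admits open
neighborhoods `V₀, V₁` of `α 0, α 1` such that every pair `(a, b) ∈ V₀ × V₁` is joined
by a path in `U`. -/
def IsWellEnded {X : Type*} [TopologicalSpace X] (α : C(I, X)) : Prop :=
  ∀ U : Set C(I, X), IsOpen U → α ∈ U →
    ∃ V₀ V₁ : Set X, IsOpen V₀ ∧ IsOpen V₁ ∧ α 0 ∈ V₀ ∧ α 1 ∈ V₁ ∧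
      ∀ a ∈ V₀, ∀ b ∈ V₁, ∃ β ∈ U, β 0 = a ∧ β 1 = b

/-- A space is wep-connected if every pair of its points is joined by a well-ended path. -/
def WepConnected (X : Type*) [TopologicalSpace X] : Prop :=
  ∀ x y : X, ∃ α : C(I, X), α 0 = x ∧ α 1 = y ∧ IsWellEnded α

/-- `X` is locally path connected at `x` if every open neighborhood of `x` contains a path
connected open neighborhood of `x`. -/
def LocallyPathConnectedAt {X : Type*} [TopologicalSpace X] (x : X) : Prop :=
  ∀ U : Set X, IsOpen U → x ∈ U →
    ∃ V : Set X, V ⊆ U ∧ IsOpen V ∧ x ∈ V ∧ IsPathConnected V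

/-- If `X` is locally path connected at both endpoints of a path `α`, then `α` is
well-ended. -/
theorem isWellEnded_of_locallyPathConnectedAt {X : Type*} [TopologicalSpace X] (α : C(I, X))
    (h0 : LocallyPathConnectedAt (α 0)) (h1 : LocallyPathConnectedAt (α 1)) :
    IsWellEnded α := by
  classical
  intro U hU hαU
  obtain ⟨v, ⟨F, ⟨hFfin, hFsub⟩, rfl⟩, hαv, hvU⟩ :=
    (TopologicalSpace.isTopologicalBasis_of_subbasis
      ContinuousMap.compactOpen_eq).exists_subset_of_mem_open hαU hU
  haveI : Finite ↥F := hFfin.to_subtype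
  have hex : ∀ s : ↥F, ∃ KO : Set I × Set X, IsCompact KO.1 ∧ IsOpen KO.2 ∧
      (s : Set C(I,X)) = {f : C(I,X) | MapsTo (⇑f) KO.1 KO.2} := by
    intro s
    obtain ⟨K, hK, O, hO, hs⟩ := hFsub s.2
    exact ⟨(K, O), hK, hO, hs.symm⟩
  choose KO hKc hOo hsEq using hex
  set K : ↥F → Set I := fun s => (KO s).1 with hKdef
  set O : ↥F → Set X := fun s => (KO s).2 with hOdef
  have hαK : ∀ s : ↥F, MapsTo α (K s) (O s) := by
    intro s
    have := hαv s.1 s.2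
    rwa [hsEq s] at this
  -- the endpoint neighborhoods from the subbasic sets
  set O₀ : Set X := ⋂ s : ↥F, if (0:I) ∈ K s then O s else univ with hO₀def
  set O₁ : Set X := ⋂ s : ↥F, if (1:I) ∈ K s then O s else univ with hO₁def
  have hO₀open : IsOpen O₀ := isOpen_iInter_of_finite fun s => by
    split_ifs; exacts [hOo s, isOpen_univ]
  have hO₁open : IsOpen O₁ := isOpen_iInter_of_finite fun s => by
    split_ifs; exacts [hOo s, isOpen_univ]
  have hα0O₀ : α 0 ∈ O₀ := mem_iInter.2 fun s => by
    split_ifs with h; exacts [hαK s h, mem_univ _]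
  have hα1O₁ : α 1 ∈ O₁ := mem_iInter.2 fun s => by
    split_ifs with h; exacts [hαK s h, mem_univ _]
  have hO₀sub : ∀ s : ↥F, (0:I) ∈ K s → O₀ ⊆ O s := by
    intro s hs x hx
    have := mem_iInter.1 hx s
    rwa [if_pos hs] at this
  have hO₁sub : ∀ s : ↥F, (1:I) ∈ K s → O₁ ⊆ O s := by
    intro s hs x hx
    have := mem_iInter.1 hx s
    rwa [if_pos hs] at this
  -- choose ε
  have he1 : ∃ e > 0, ∀ s : ↥F, (0:I) ∉ K s → ∀ t ∈ K s, e ≤ (t:ℝ) := by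
    set C : Set ℝ := ⋃ s : ↥F, ⋃ (_ : (0:I) ∉ K s), (fun t : I => (t:ℝ)) '' K s with hCdef
    have hCc : IsClosed C := isClosed_iUnion_of_finite fun s => isClosed_iUnion_of_finite
      fun _ => (((hKc s).image continuous_subtype_val).isClosed)
    have h0C : (0:ℝ) ∈ Cᶜ := by
      intro hC
      rcases mem_iUnion.1 hC with ⟨s, hC2⟩
      rcases mem_iUnion.1 hC2 with ⟨hs, t, htK, ht0⟩
      exact hs (by rwa [show t = (0:I) from Subtype.ext ht0] at htK)
    obtain ⟨e, he, hball⟩ := Metric.isOpen_iff.1 hCc.isOpen_compl 0 h0C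
    refine ⟨e, he, fun s hs t ht => ?_⟩
    by_contra hlt
    push_neg at hlt
    have htC : (t:ℝ) ∈ C := mem_iUnion.2 ⟨s, mem_iUnion.2 ⟨hs, ⟨t, ht, rfl⟩⟩⟩
    exact (hball (by
      rw [Metric.mem_ball, Real.dist_eq, sub_zero, abs_of_nonneg t.2.1]
      exact hlt)) htC
  have he2 : ∃ e > 0, ∀ s : ↥F, (1:I) ∉ K s → ∀ t ∈ K s, (t:ℝ) ≤ 1 - e := by
    set C : Set ℝ := ⋃ s : ↥F, ⋃ (_ : (1:I) ∉ K s), (fun t : I => (t:ℝ)) '' K s with hCdef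
    have hCc : IsClosed C := isClosed_iUnion_of_finite fun s => isClosed_iUnion_of_finite
      fun _ => (((hKc s).image continuous_subtype_val).isClosed)
    have h0C : (1:ℝ) ∈ Cᶜ := by
      intro hC
      rcases mem_iUnion.1 hC with ⟨s, hC2⟩
      rcases mem_iUnion.1 hC2 with ⟨hs, t, htK, ht0⟩
      exact hs (by rwa [show t = (1:I) from Subtype.ext ht0] at htK)
    obtain ⟨e, he, hball⟩ := Metric.isOpen_iff.1 hCc.isOpen_compl 1 h0C
    refine ⟨e, he, fun s hs t ht => ?_⟩
    by_contra hlt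
    push_neg at hlt
    have htC : (t:ℝ) ∈ C := mem_iUnion.2 ⟨s, mem_iUnion.2 ⟨hs, ⟨t, ht, rfl⟩⟩⟩
    exact (hball (by
      rw [Metric.mem_ball, Real.dist_eq, abs_of_nonpos (by linarith [t.2.2] : (t:ℝ) - 1 ≤ 0)]
      linarith)) htC
  have he3 : ∃ e > 0, ∀ t : I, (t:ℝ) < e → α t ∈ O₀ := by
    have hmem : α ⁻¹' O₀ ∈ 𝓝 (0:I) :=
      (hO₀open.preimage α.continuous).mem_nhds hα0O₀
    obtain ⟨e, he, hball⟩ := Metric.mem_nhds_iff.1 hmem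
    refine ⟨e, he, fun t ht => hball ?_⟩
    have hc : ((0:I):ℝ) = 0 := rfl
    rw [Metric.mem_ball, Subtype.dist_eq, Real.dist_eq, hc, sub_zero, abs_of_nonneg t.2.1]
    exact ht
  have he4 : ∃ e > 0, ∀ t : I, 1 - e < (t:ℝ) → α t ∈ O₁ := by
    have hmem : α ⁻¹' O₁ ∈ 𝓝 (1:I) :=
      (hO₁open.preimage α.continuous).mem_nhds hα1O₁
    obtain ⟨e, he, hball⟩ := Metric.mem_nhds_iff.1 hmem
    refine ⟨e, he, fun t ht => hball ?_⟩
    have hc : ((1:I):ℝ) = 1 := rfl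
    rw [Metric.mem_ball, Subtype.dist_eq, Real.dist_eq, hc,
      abs_of_nonpos (by linarith [t.2.2] : (t:ℝ) - 1 ≤ 0)]
    linarith
  obtain ⟨e1, he1p, he1⟩ := he1
  obtain ⟨e2, he2p, he2⟩ := he2
  obtain ⟨e3, he3p, he3⟩ := he3
  obtain ⟨e4, he4p, he4⟩ := he4
  set ε : ℝ := min (min e1 e2) (min (min e3 e4) (1/2)) / 2 with hεdef
  have hεpos : 0 < ε := by positivity
  have hεhalf : ε < 1/2 := by
    have h := min_le_right (min e1 e2) (min (min e3 e4) (1/2))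
    have h2 := min_le_right (min e3 e4) (1/2)
    simp only [hεdef]; linarith
  have hεe1 : ε < e1 := by
    have := min_le_left e1 e2
    have h2 := min_le_left (min e1 e2) (min (min e3 e4) (1/2))
    simp only [hεdef]; linarith
  have hεe2 : ε < e2 := by
    have := min_le_right e1 e2
    have h2 := min_le_left (min e1 e2) (min (min e3 e4) (1/2))
    simp only [hεdef]; linarith
  have hεe3 : ε < e3 := by
    have := min_le_left e3 e4
    have h2 := min_le_left (min e3 e4) (1/2)
    have h3 := min_le_right (min e1 e2) (min (min e3 e4) (1/2))
    simp only [hεdef]; linarith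
  have hεe4 : ε < e4 := by
    have := min_le_right e3 e4
    have h2 := min_le_left (min e3 e4) (1/2)
    have h3 := min_le_right (min e1 e2) (min (min e3 e4) (1/2))
    simp only [hεdef]; linarith
  have hα0ε : ∀ t : I, (t:ℝ) ≤ ε → α t ∈ O₀ := fun t ht => he3 t (lt_of_le_of_lt ht hεe3)
  have hα1ε : ∀ t : I, 1 - ε ≤ (t:ℝ) → α t ∈ O₁ := fun t ht => he4 t (by linarith)
  -- path connected neighborhoods
  obtain ⟨V₀, hV₀sub, hV₀open, hα0V₀, hV₀pc⟩ := h0 O₀ hO₀open hα0O₀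
  obtain ⟨V₁, hV₁sub, hV₁open, hα1V₁, hV₁pc⟩ := h1 O₁ hO₁open hα1O₁
  refine ⟨V₀, V₁, hV₀open, hV₁open, hα0V₀, hα1V₁, fun a ha b hb => ?_⟩
  obtain ⟨p, hp⟩ := hV₀pc.joinedIn a ha (α 0) hα0V₀
  obtain ⟨q, hq⟩ := hV₁pc.joinedIn (α 1) hα1V₁ b hb
  set β : C(I, X) := ⟨fun t => glueFun α p q ε ↑t,
    (glueFun_continuous α p q hεpos hεhalf).comp continuous_subtype_val⟩ with hβdef
  refine ⟨β, hvU ?_, ?_, ?_⟩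
  · -- β ∈ ⋂₀ F
    intro s hs
    have heq : s = {f : C(I,X) | MapsTo (⇑f) (K ⟨s,hs⟩) (O ⟨s,hs⟩)} := hsEq ⟨s,hs⟩
    rw [heq]
    intro t ht
    show glueFun α p q ε ↑t ∈ O ⟨s, hs⟩
    rcases le_or_gt (t:ℝ) ε with h | h
    · -- left piece
      have h0K : (0:I) ∈ K ⟨s, hs⟩ := by
        by_contra h0
        exact absurd (he1 _ h0 t ht) (by linarith)
      exact glueFun_left α p q hεpos (by linarith) h
        (fun u => hO₀sub _ h0K (hV₀sub (hp u)))
        (fun u hu => hO₀sub _ h0K (hα0ε u hu))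
    rcases le_or_gt (t:ℝ) (1-ε) with h' | h'
    · rw [glueFun_mid α p q hεpos (le_of_lt h) h']
      exact hαK _ ht
    · have h1K : (1:I) ∈ K ⟨s, hs⟩ := by
        by_contra h1
        exact absurd (he2 _ h1 t ht) (by linarith)
      exact glueFun_right α p q hεpos hεhalf (le_of_lt h')
        (fun u => hO₁sub _ h1K (hV₁sub (hq u)))
        (fun u hu => hO₁sub _ h1K (hα1ε u hu))
  · show glueFun α p q ε ((0:I):ℝ) = a
    rw [show ((0:I):ℝ) = (0:ℝ) from rfl]
    exact glueFun_zero α p q hεpos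
  · show glueFun α p q ε ((1:I):ℝ) = b
    rw [show ((1:I):ℝ) = (1:ℝ) from rfl]
    exact glueFun_one α p q hεpos hεhalf
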